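/- Let F be a totally real number field of degree N and let σ range over the N real embeddings F → ℝ. Let x, x' ∈ F satisfy tr_{F/ℚ}(x·x') < 0. Then ∏_σ ( 2 ∫_0^∞ e^{−π( σ(x)²/t² + σ(x')² t² )} · ( σ(x)/t + σ(x')·t ) dt/t ) = 0. -/

import Mathlib

open MeasureTheory

/-- The one-variable archimedean integral vanishes when `a * b < 0`, by the
substitution `t ↦ (-a/b) / t` which flips the sign of the integrand. -/
lemma archimedean_factor_vanishes {a b : ℝ} (hab : a * b < 0) :
    (∫ t in Set.Ioi (0 : ℝ),
        Real.exp (-Real.pi * (a ^ 2 / t ^ 2 + b ^ 2 * t ^ 2)) * (a / t + b * t) / t) = 0 := by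
  have ha : a ≠ 0 := by rintro rfl; simp at hab
  have hb : b ≠ 0 := by rintro rfl; simp at hab
  set g : ℝ → ℝ := fun t =>
    Real.exp (-Real.pi * (a ^ 2 / t ^ 2 + b ^ 2 * t ^ 2)) * (a / t + b * t) / t with hg
  set c : ℝ := -(a * b) / b ^ 2 with hcdef
  have hc : 0 < c := div_pos (by linarith) (by positivity)
  have hc' : c = -a / b := by rw [hcdef]; field_simp
  have hderiv : ∀ t ∈ Set.Ioi (0 : ℝ),
      HasDerivWithinAt (fun t : ℝ => c / t) (-c / t ^ 2) (Set.Ioi 0) t := by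
    intro t ht
    have ht' : t ≠ 0 := (Set.mem_Ioi.mp ht).ne'
    have : HasDerivAt (fun t : ℝ => c / t) (-c / t ^ 2) t := by
      simpa [div_eq_mul_inv, mul_comm, neg_div] using (hasDerivAt_inv ht').const_mul c
    exact this.hasDerivWithinAt
  have hinj : Set.InjOn (fun t : ℝ => c / t) (Set.Ioi 0) := by
    intro s hs t ht h
    have hs' : s ≠ 0 := (Set.mem_Ioi.mp hs).ne'
    have ht' : t ≠ 0 := (Set.mem_Ioi.mp ht).ne'
    field_simp at h
    rcases h with h | h
    · rfl
  have himg : (fun t : ℝ => c / t) '' Set.Ioi 0 = Set.Ioi 0 := by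
    ext y
    constructor
    · rintro ⟨t, ht, rfl⟩
      exact Set.mem_Ioi.mpr (div_pos hc (Set.mem_Ioi.mp ht))
    · intro hy
      have hy' : 0 < y := Set.mem_Ioi.mp hy
      exact ⟨c / y, Set.mem_Ioi.mpr (div_pos hc hy'), by field_simp⟩
  have hcv := integral_image_eq_integral_abs_deriv_smul measurableSet_Ioi hderiv hinj g
  rw [himg] at hcv
  have heq : ∀ t ∈ Set.Ioi (0 : ℝ), |-c / t ^ 2| • g (c / t) = -g t := by
    intro t ht
    have ht' : 0 < t := Set.mem_Ioi.mp ht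
    have habs : |-c / t ^ 2| = c / t ^ 2 := by
      rw [abs_div, abs_neg, abs_of_nonneg hc.le, abs_of_nonneg (by positivity : (0:ℝ) ≤ t ^ 2)]
    have hexp : a ^ 2 / (c / t) ^ 2 + b ^ 2 * (c / t) ^ 2
        = a ^ 2 / t ^ 2 + b ^ 2 * t ^ 2 := by
      rw [hc']; field_simp; ring
    rw [habs, smul_eq_mul, hg]
    simp only [hexp]
    rw [hc']
    field_simp [ha, hb, ht'.ne']
    ring
  rw [setIntegral_congr_fun measurableSet_Ioi heq, integral_neg] at hcv
  linarith

/-- Part (4) of Lemma 4.3: the archimedean integral vanishes for negative vectors. -/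
theorem archimedean_integral_vanishes_on_negative_vectors
    (F : Type*) [Field F] [NumberField F] (N : ℕ)
    (hdeg : Module.finrank ℚ F = N)
    (σ : Fin N → (F →+* ℝ)) (hσ : Function.Bijective σ)
    (x x' : F) (htr : Algebra.trace ℚ F (x * x') < 0) :
    (∏ j, 2 * ∫ t in Set.Ioi (0 : ℝ),
        Real.exp (-Real.pi * ((σ j x) ^ 2 / t ^ 2 + (σ j x') ^ 2 * t ^ 2))
          * ((σ j x) / t + (σ j x') * t) / t) = 0 := by
  classical
  -- cardinalities
  have hcardC : Fintype.card (F →+* ℂ) = N := by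
    rw [NumberField.Embeddings.card F ℂ, hdeg]
  have hcardR : Fintype.card (F →+* ℝ) = N := by
    rw [← Fintype.card_of_bijective hσ, Fintype.card_fin]
  -- the composition with ℝ ↪ ℂ is a bijection
  let ι : (F →+* ℝ) → (F →+* ℂ) := fun φ => Complex.ofRealHom.comp φ
  have hιinj : Function.Injective ι := by
    intro φ ψ h
    ext y
    exact Complex.ofReal_injective (RingHom.congr_fun h y)
  have hιbij : Function.Bijective ι :=
    (Fintype.bijective_iff_injective_and_card ι).2 ⟨hιinj, by rw [hcardR, hcardC]⟩
  -- trace as a sum over complex embeddings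
  have h1 : (algebraMap ℚ ℂ (Algebra.trace ℚ F (x * x')))
      = ∑ τ : F →ₐ[ℚ] ℂ, τ (x * x') := trace_eq_sum_embeddings ℂ
  have h2 : ∑ τ : F →ₐ[ℚ] ℂ, τ (x * x') = ∑ φ : F →+* ℂ, φ (x * x') := by
    rw [← Fintype.sum_equiv (RingHom.equivRatAlgHom F ℂ) (fun φ => φ (x * x'))
      (fun τ => τ (x * x')) (fun φ => rfl)]
  have h3 : ∑ φ : F →+* ℂ, φ (x * x') = ∑ j, ((σ j (x * x') : ℝ) : ℂ) := by
    rw [← Function.Bijective.sum_comp (hιbij.comp hσ) (fun φ => φ (x * x'))]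
    rfl
  have hreal : ((Algebra.trace ℚ F (x * x') : ℚ) : ℝ) = ∑ j, σ j (x * x') := by
    apply Complex.ofReal_injective
    push_cast
    rw [← h3, ← h2, ← h1]
    simp
  have hsumneg : ∑ j, σ j x * σ j x' < 0 := by
    have : ((Algebra.trace ℚ F (x * x') : ℚ) : ℝ) < 0 := by exact_mod_cast htr
    rw [hreal] at this
    simpa [map_mul] using this
  have hj : ∃ j, σ j x * σ j x' < 0 := by
    by_contra h
    push_neg at h
    exact absurd (Finset.sum_nonneg fun j _ => h j) (not_le.mpr hsumneg)
  obtain ⟨j, hj⟩ := hj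
  apply Finset.prod_eq_zero (Finset.mem_univ j)
  rw [archimedean_factor_vanishes hj, mul_zero]
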